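/- Let X be a compact Kähler surface satisfying h^{2,0} = h^{0,2} = 0, b₁(X) even, and K = ∫_X n² > 0 for a Kähler class n. With c = √−1, define on each Gr_k^𝒲 A_ℝ the (−1)^k-symmetric bilinear form Q_k(x,y) = ((√−1)^k/2){(Cx, y)_{k−1} + (−1)^k (x, Cy)_{k−1}} where C is the Weil operator C|_{A^{p,q}} = (√−1)^{p−q}. Then each Hermitian form H_k(x,y) := Q_k(Cx, ȳ) is positive definite; in particular Q₂(x,y) = −∫_X x∪y is positive definite on H²_prim(X,ℝ), and (𝒲_•, ℱ^•, Q_•) is a graded polarized ℝ-mixed Hodge structure. -/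
import Mathlib


set_option maxHeartbeats 3200000 in
/-- graded polarization: for a compact Kähler surface with
`h^{2,0} = h^{0,2} = 0`, `b₁` even and `K = ∫ n² > 0` — conditions which, by the
Hodge index theorem [BHPV IV.2.15], amount to the intersection form being
negative definite on `H²_prim(X,ℝ)` (hypothesis `hneg` below) — the forms
`Q_k(x,y) = ((√−1)^k/2){(Cx,y)_{k−1} + (−1)^k(x,Cy)_{k−1}}` polarize the mixed
Hodge structure `(𝒲_•, ℱ^•)` on `A_ℝ`: each Hermitian form
`H_k(x,y) = Q_k(Cx, ȳ)` is positive definite (here `C` is the Weil operator and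
`ȳ = conjAR y` the conjugation with respect to the real form `A_ℝ`); in
particular `Q₂(x,y) = −∫ x∪y` is positive definite on `H²_prim(X,ℝ)`, and the
explicit values are `Q₁(n², n+√−1n²) = K`, `Q₁(n+√−1n², n+√−1n²) =
Q₁(n²,n²) = 0`, `Q₄(1,1) = K`; moreover `(𝒲_•, ℱ^•, Q_•)` is a graded polarized
ℝ-mixed Hodge structure (the mixed Hodge structure property is restated as the
opposedness condition of STATEMENT 9). -/
theorem stmt11 {A : Type*} [CommRing A] [Algebra ℂ A] [FiniteDimensional ℂ A]
    (H0 H2 H4 : Submodule ℂ A)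
    (hsum : H0 ⊔ H2 ⊔ H4 = ⊤)
    (hindep : ∀ a ∈ H0, ∀ x ∈ H2, ∀ y ∈ H4, a + x + y = 0 → a = 0 ∧ x = 0 ∧ y = 0)
    (hH0 : H0 = Submodule.span ℂ {(1 : A)})
    (hmul22 : ∀ x ∈ H2, ∀ y ∈ H2, x * y ∈ H4)
    (hmul24 : ∀ x ∈ H2, ∀ y ∈ H4, x * y = 0)
    (hmul44 : ∀ x ∈ H4, ∀ y ∈ H4, x * y = 0)
    (intg : A →ₗ[ℂ] ℂ)
    (hint0 : ∀ x ∈ H0 ⊔ H2, intg x = 0)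
    (hnondeg : ∀ x : A, (∀ y : A, intg (x * y) = 0) → x = 0)
    -- real structure
    (conj : A →ₗ[ℝ] A)
    (hcc : ∀ x, conj (conj x) = x)
    (hcm : ∀ x y, conj (x * y) = conj x * conj y)
    (hca : ∀ (z : ℂ) (x : A), conj (z • x) = (starRingEnd ℂ z) • conj x)
    (hc1 : conj 1 = 1)
    (hcH0 : ∀ x ∈ H0, conj x ∈ H0)
    (hcH2 : ∀ x ∈ H2, conj x ∈ H2)
    (hcH4 : ∀ x ∈ H4, conj x ∈ H4)
    -- the Kähler class
    (n : A) (hn : n ∈ H2) (hcn : conj n = n)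
    (K : ℝ) (hK : intg (n * n) = (K : ℂ)) (hKpos : 0 < K)
    (hH4 : H4 = Submodule.span ℂ {n * n})
    (hlef : H2 = (H2 ⊓ LinearMap.ker (LinearMap.mulRight ℂ n)) ⊔
      Submodule.span ℂ {n})
    -- the conditions h^{2,0}=h^{0,2}=0, b₁ even, K>0, via the Hodge index
    -- theorem: the intersection form is negative definite on H²_prim(X,ℝ)
    (hneg : ∀ x : A, conj x = x → x ∈ H2 → n * x = 0 → x ≠ 0 →
      (intg (x * x)).re < 0 ∧ (intg (x * x)).im = 0)
    -- the pairing (·,·)₀ of the nilpotent construction on I₀ = (n)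
    (p0 : A →ₗ[ℂ] A →ₗ[ℂ] ℂ)
    (hp0 : ∀ x y : A, p0 (n * x) (n * y) = intg (x * (n * y)))
    -- the Weil operator C (C = (√−1)^{p−q} on A^{p,q})
    (C : A →ₗ[ℂ] A)
    (hC10 : C n = Complex.I • n)
    (hC01 : C (n + (2 * Complex.I) • (n * n))
      = (-Complex.I) • (n + (2 * Complex.I) • (n * n)))
    (hC11 : ∀ x : A, x ∈ H2 → n * x = 0 → C x = x)
    (hC22 : C 1 = 1) :
    let expc : A := 1 + Complex.I • n - (1 / 2 : ℂ) • (n * n)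
    let Rpts : Submodule ℝ A := LinearMap.ker (conj - LinearMap.id)
    let ARsub : Submodule ℝ A :=
      Submodule.map ((LinearMap.mulRight ℂ expc).restrictScalars ℝ) Rpts
    let conjAR : A →ₗ[ℝ] A :=
      ((LinearMap.mulRight ℂ (expc * expc)).restrictScalars ℝ).comp conj
    let prim : Submodule ℂ A := H2 ⊓ LinearMap.ker (LinearMap.mulRight ℂ n)
    let primR : Submodule ℝ A := Rpts ⊓ prim.restrictScalars ℝ
    let W : ℤ → Submodule ℝ A := fun l =>
      if l ≤ 0 then ⊥
      else if l = 1 then Submodule.span ℝ {n + Complex.I • (n * n), n * n}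
      else if l ≤ 3 then Submodule.span ℝ {n + Complex.I • (n * n), n * n} ⊔ primR
      else ARsub
    let F : ℤ → Submodule ℂ A := fun p =>
      if p ≤ 0 then ⊤ else if p = 1 then H0 ⊔ H2 else if p = 2 then H0 else ⊥
    let WC : ℤ → Submodule ℂ A := fun l => Submodule.span ℂ (W l : Set A)
    -- Q₁ by the defining formula (k = 1)
    let Q1 : A → A → ℂ := fun x y =>
      (Complex.I / 2) * (p0 (C x) y - p0 x (C y))
    -- the explicit values of Q₁ and Q₄
    (Q1 (n * n) (n + Complex.I • (n * n)) = (K : ℂ)) ∧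
    (Q1 (n + Complex.I • (n * n)) (n + Complex.I • (n * n)) = 0) ∧
    (Q1 (n * n) (n * n) = 0) ∧
    (intg ((1 : A) * ((1 : A) * n ^ 2)) = (K : ℂ)) ∧      -- Q₄(1,1) = K
    -- in particular Q₂(x,y) = −∫ x∪y is positive definite on H²_prim(X,ℝ)
    (∀ x : A, conj x = x → x ∈ H2 → n * x = 0 → x ≠ 0 →
      0 < (-(intg (x * x))).re) ∧
    -- the Hermitian forms H_k(x,y) = Q_k(Cx, ȳ) are positive definite:
    -- H₁ on Gr₁ = 𝒲₁ ⊗ ℂ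
    (∀ x : A, x ∈ WC 1 → x ≠ 0 →
      0 < (Q1 (C x) (conjAR x)).re ∧ (Q1 (C x) (conjAR x)).im = 0) ∧
    -- H₂ on Gr₂ = H²_prim(X,ℂ)
    (∀ x : A, x ∈ H2 → n * x = 0 → x ≠ 0 →
      0 < (-(intg (x * conjAR x))).re ∧ (intg (x * conjAR x)).im = 0) ∧
    -- H₄ on Gr₄ = ℂ·1 (via (x,y)₃ = ⟨x̃, ỹ∘n²⟩)
    (∀ a : ℂ, a ≠ 0 →
      0 < (intg ((a • (1 : A)) * (conjAR (a • (1 : A)) * n ^ 2))).re ∧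
        (intg ((a • (1 : A)) * (conjAR (a • (1 : A)) * n ^ 2))).im = 0) ∧
    -- and (𝒲_•, ℱ^•, Q_•) is a graded polarized ℝ-mixed Hodge structure:
    -- the mixed Hodge structure property (opposedness on each Gr_k^𝒲)
    (∀ l : ℤ, W l ≤ ARsub) ∧
    (∀ k p q : ℤ, p + q = k + 1 →
      ((F p ⊓ WC k).restrictScalars ℝ ⊔
          (Submodule.map conjAR ((F q).restrictScalars ℝ) ⊓
            (WC k).restrictScalars ℝ) ⊔
          (WC (k - 1)).restrictScalars ℝ
        = (WC k).restrictScalars ℝ) ∧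
      ((F p).restrictScalars ℝ ⊓
          Submodule.map conjAR ((F q).restrictScalars ℝ) ⊓
          (WC k).restrictScalars ℝ
        ≤ (WC (k - 1)).restrictScalars ℝ)) := by
  intro expc Rpts ARsub conjAR prim primR W F WC Q1
  have hm4 : n * n ∈ H4 := hmul22 n hn n hn
  have hnm : n * (n * n) = 0 := hmul24 n hn _ hm4
  have hnm' : (n * n) * n = 0 := by rw [mul_comm]; exact hnm
  have hmm : (n * n) * (n * n) = 0 := hmul44 _ hm4 _ hm4
  have h1H0 : (1 : A) ∈ H0 := hH0 ▸ Submodule.mem_span_singleton_self 1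
  have hintn : intg n = 0 := hint0 n (Submodule.mem_sup_right hn)
  have hintH2 : ∀ x ∈ H2, intg x = 0 := fun x hx => hint0 x (Submodule.mem_sup_right hx)
  have hn2ne : n * n ≠ 0 := by
    intro h
    have : (K : ℂ) = 0 := by rw [← hK, h, map_zero]
    exact hKpos.ne' (by exact_mod_cast this)
  have h1ne : (1 : A) ≠ 0 := fun h => hn2ne (by rw [← mul_one (n * n), h, mul_zero])
  have hsmul1 : ∀ c : ℂ, c • (1 : A) = 0 → c = 0 := by
    intro c h
    rcases smul_eq_zero.mp h with h | h
    · exact h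
    · exact absurd h h1ne
  have hsmuln2 : ∀ c : ℂ, c • (n * n) = 0 → c = 0 := by
    intro c h
    rcases smul_eq_zero.mp h with h | h
    · exact h
    · exact absurd h hn2ne
  -- Weil operator values
  have hCm : C (n * n) = -n - Complex.I • (n * n) := by
    have h := hC01
    rw [map_add, map_smul, hC10] at h
    have h2 : (2 * Complex.I) • C (n * n) = (2 * Complex.I) • (-n - Complex.I • (n * n)) := by
      have e : (2 * Complex.I) • (-n - Complex.I • (n * n))
          = (-Complex.I) • (n + (2 * Complex.I) • (n * n)) - Complex.I • n := by
        simp only [smul_add, smul_sub, smul_neg, smul_smul]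
        match_scalars <;> ring_nf <;> simp [Complex.I_sq] <;> ring_nf
      rw [e, ← h]
      abel
    exact smul_right_injective A (by simp [Complex.ext_iff] : (2 * Complex.I) ≠ 0) h2
  have hCe1 : C (n + Complex.I • (n * n)) = n * n := by
    rw [map_add, map_smul, hC10, hCm, smul_sub, smul_smul, Complex.I_mul_I]
    match_scalars <;> ring
  have hCm' : C (n * n) = -(n + Complex.I • (n * n)) := by
    rw [hCm]; abel
  -- products
  have he1 : n * ((1 : A) + Complex.I • n) = n + Complex.I • (n * n) := by
    rw [mul_add, mul_one, mul_smul_comm]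
  -- p0 values
  have hp11 : p0 (n + Complex.I • (n * n)) (n + Complex.I • (n * n)) = 2 * Complex.I * K := by
    rw [← he1, hp0, he1]
    have e : ((1 : A) + Complex.I • n) * (n + Complex.I • (n * n))
        = n + (2 * Complex.I) • (n * n) := by
      simp only [mul_add, add_mul, sub_mul, mul_sub, one_mul, mul_one, smul_mul_assoc, mul_smul_comm, smul_smul, hnm, hnm', hmm, smul_zero, sub_zero, add_zero, zero_sub, neg_neg, neg_smul, neg_mul, mul_neg, smul_neg, neg_zero, zero_add, zero_mul, mul_zero, zero_smul]
      match_scalars <;> ring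
    rw [e, map_add, map_smul, hintn, hK, smul_eq_mul]
    ring
  have hp12 : p0 (n + Complex.I • (n * n)) (n * n) = (K : ℂ) := by
    have h := hp0 ((1 : A) + Complex.I • n) n
    rw [he1] at h
    rw [h]
    have e : ((1 : A) + Complex.I • n) * (n * n) = n * n := by
      rw [add_mul, one_mul, smul_mul_assoc, hnm, smul_zero, add_zero]
    rw [e]
    exact hK
  have hp21 : p0 (n * n) (n + Complex.I • (n * n)) = (K : ℂ) := by
    have h := hp0 n ((1 : A) + Complex.I • n)
    rw [he1] at h
    rw [h, mul_add, mul_smul_comm, hnm, smul_zero, add_zero]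
    exact hK
  have hp22 : p0 (n * n) (n * n) = 0 := by
    have h := hp0 n n
    rw [h, hnm, map_zero]
  have hp01 : p0 n (n + Complex.I • (n * n)) = Complex.I * K := by
    have h := hp0 1 ((1 : A) + Complex.I • n)
    rw [mul_one, he1, one_mul] at h
    rw [h, map_add, map_smul, hintn, hK, smul_eq_mul, zero_add]
  have hp00 : p0 n n = 0 := by
    have h := hp0 1 1
    rw [mul_one, one_mul] at h
    rw [h]
    exact hintn
  have hp02 : p0 n (n * n) = (K : ℂ) := by
    have h := hp0 1 n
    rw [mul_one, one_mul] at h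
    rw [h]
    exact hK
  have hp20 : p0 (n * n) n = (K : ℂ) := by
    have h := hp0 n 1
    rw [mul_one] at h
    rw [h]
    exact hK
  -- conjugation facts
  have hcm2 : conj (n * n) = n * n := by rw [hcm, hcn]
  have hE2 : expc * expc = 1 + (2 * Complex.I) • n - (2 : ℂ) • (n * n) := by
    show ((1 : A) + Complex.I • n - (1 / 2 : ℂ) • (n * n)) *
        ((1 : A) + Complex.I • n - (1 / 2 : ℂ) • (n * n)) = _
    simp only [mul_add, add_mul, sub_mul, mul_sub, one_mul, mul_one, smul_mul_assoc, mul_smul_comm, smul_smul, hnm, hnm', hmm, smul_zero, sub_zero, add_zero, zero_sub, neg_neg, neg_smul, neg_mul, mul_neg, smul_neg, neg_zero, zero_add, zero_mul, mul_zero, zero_smul]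
    match_scalars <;> ring_nf <;> simp [Complex.I_sq] <;> ring_nf
  have hcE2 : conj (expc * expc) = 1 - (2 * Complex.I) • n - (2 : ℂ) • (n * n) := by
    rw [hE2, map_sub, map_add, hca, hca, hc1, hcn, hcm2, map_mul, Complex.conj_I, map_ofNat]
    match_scalars <;> ring
  have hE2conj : (expc * expc) * conj (expc * expc) = 1 := by
    rw [hcE2, hE2]
    simp only [mul_add, add_mul, sub_mul, mul_sub, one_mul, mul_one, smul_mul_assoc, mul_smul_comm, smul_smul, hnm, hnm', hmm, smul_zero, sub_zero, add_zero, zero_sub, neg_neg, neg_smul, neg_mul, mul_neg, smul_neg, neg_zero, zero_add, zero_mul, mul_zero, zero_smul]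
    match_scalars <;> ring_nf <;> simp [Complex.I_sq] <;> ring_nf
  have hcAR : ∀ x : A, conjAR x = conj x * (expc * expc) := fun _ => rfl
  have hARinv : ∀ x : A, conjAR (conjAR x) = x := by
    intro x
    rw [hcAR, hcAR, hcm, hcc, mul_assoc, mul_comm (conj (expc * expc)), hE2conj, mul_one]
  have hmem_map : ∀ (S : Submodule ℂ A) (y : A),
      y ∈ Submodule.map conjAR (S.restrictScalars ℝ) ↔ conjAR y ∈ S := by
    intro S y
    constructor
    · rintro ⟨x, hx, rfl⟩; rw [hARinv]; exact hx
    · intro h; exact ⟨conjAR y, h, hARinv y⟩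
  have hARsmul : ∀ (c : ℂ) (x : A), conjAR (c • x) = (starRingEnd ℂ c) • conjAR x := by
    intro c x
    rw [hcAR, hcAR, hca, smul_mul_assoc]
  have hARe1 : conjAR (n + Complex.I • (n * n)) = n + Complex.I • (n * n) := by
    rw [hcAR, map_add, hca, hcn, hcm2, Complex.conj_I, hE2]
    simp only [mul_add, add_mul, sub_mul, mul_sub, one_mul, mul_one, smul_mul_assoc, mul_smul_comm, smul_smul, hnm, hnm', hmm, smul_zero, sub_zero, add_zero, zero_sub, neg_neg, neg_smul, neg_mul, mul_neg, smul_neg, neg_zero, zero_add, zero_mul, mul_zero, zero_smul]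
    match_scalars <;> ring_nf <;> simp [Complex.I_sq] <;> ring_nf
  have hARm : conjAR (n * n) = n * n := by
    rw [hcAR, hcm2, hE2]
    simp only [mul_add, add_mul, sub_mul, mul_sub, one_mul, mul_one, smul_mul_assoc, mul_smul_comm, smul_smul, hnm, hnm', hmm, smul_zero, sub_zero, add_zero, zero_sub, neg_neg, neg_smul, neg_mul, mul_neg, smul_neg, neg_zero, zero_add, zero_mul, mul_zero, zero_smul]
  have hARn : conjAR n = n + (2 * Complex.I) • (n * n) := by
    rw [hcAR, hcn, hE2]
    simp only [mul_add, add_mul, sub_mul, mul_sub, one_mul, mul_one, smul_mul_assoc, mul_smul_comm, smul_smul, hnm, hnm', hmm, smul_zero, sub_zero, add_zero, zero_sub, neg_neg, neg_smul, neg_mul, mul_neg, smul_neg, neg_zero, zero_add, zero_mul, mul_zero, zero_smul]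
  have hAR1 : conjAR 1 = expc * expc := by
    rw [hcAR, hc1, one_mul]
  have hxE2 : ∀ x ∈ H2, x * (expc * expc) = x + (2 * Complex.I) • (n * x) := by
    intro x hx
    rw [hE2, mul_sub, mul_add, mul_one, mul_smul_comm, mul_smul_comm,
      hmul24 x hx _ hm4, smul_zero, sub_zero, mul_comm x n]
  have hzE2 : ∀ z ∈ H4, z * (expc * expc) = z := by
    intro z hz
    rw [hE2, mul_sub, mul_add, mul_one, mul_smul_comm, mul_smul_comm,
      mul_comm z n, hmul24 n hn z hz, hmul44 z hz _ hm4, smul_zero, smul_zero,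
      add_zero, sub_zero]
  -- real/imaginary decomposition of primitive classes
  have hsplit : ∀ x : A, x ∈ H2 → n * x = 0 →
      ∃ u v : A, conj u = u ∧ conj v = v ∧ u ∈ H2 ∧ v ∈ H2 ∧ n * u = 0 ∧ n * v = 0 ∧
        x = u + Complex.I • v := by
    intro x hx hnx
    have hcx2 : conj x ∈ H2 := hcH2 x hx
    have hncx : n * conj x = 0 := by rw [← hcn, ← hcm, hnx, map_zero]
    refine ⟨(1 / 2 : ℂ) • (x + conj x), (Complex.I / 2) • (conj x - x), ?_, ?_, ?_, ?_, ?_, ?_, ?_⟩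
    · rw [hca, map_add, hcc]
      have : (starRingEnd ℂ) (1 / 2 : ℂ) = 1 / 2 := by
        rw [map_div₀, map_one, map_ofNat]
      rw [this, add_comm]
    · rw [hca, map_sub, hcc]
      have : (starRingEnd ℂ) (Complex.I / 2 : ℂ) = -(Complex.I / 2) := by
        rw [map_div₀, Complex.conj_I, map_ofNat, neg_div]
      rw [this]
      match_scalars <;> ring
    · exact Submodule.smul_mem _ _ (add_mem hx hcx2)
    · exact Submodule.smul_mem _ _ (sub_mem hcx2 hx)
    · rw [mul_smul_comm, mul_add, hnx, hncx, add_zero, smul_zero]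
    · rw [mul_smul_comm, mul_sub, hnx, hncx, sub_zero, smul_zero]
    · have h2 : Complex.I * (Complex.I / 2) = -(1 / 2) := by
        have := Complex.I_mul_I
        linear_combination this / 2
      rw [smul_smul, h2]
      match_scalars <;> ring
  have hARE2 : conjAR (expc * expc) = 1 := by rw [hcAR, mul_comm, hE2conj]
  -- membership infrastructure
  have hRmem : ∀ x : A, conj x = x → x ∈ Rpts := fun x h =>
    LinearMap.mem_ker.mpr (by rw [LinearMap.sub_apply, LinearMap.id_apply, h, sub_self])
  have hARmem : ∀ x : A, conj x = x → x * expc ∈ ARsub := fun x h => ⟨x, hRmem x h, rfl⟩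
  have hnexpc : n * expc = n + Complex.I • (n * n) := by
    show n * ((1 : A) + Complex.I • n - (1 / 2 : ℂ) • (n * n)) = _
    simp only [mul_add, add_mul, sub_mul, mul_sub, one_mul, mul_one, smul_mul_assoc, mul_smul_comm, smul_smul, hnm, hnm', hmm, smul_zero, sub_zero, add_zero, zero_sub, neg_neg, neg_smul, neg_mul, mul_neg, smul_neg, neg_zero, zero_add, zero_mul, mul_zero, zero_smul]
  have hmexpc : (n * n) * expc = n * n := by
    show (n * n) * ((1 : A) + Complex.I • n - (1 / 2 : ℂ) • (n * n)) = _
    simp only [mul_add, add_mul, sub_mul, mul_sub, one_mul, mul_one, smul_mul_assoc, mul_smul_comm, smul_smul, hnm, hnm', hmm, smul_zero, sub_zero, add_zero, zero_sub, neg_neg, neg_smul, neg_mul, mul_neg, smul_neg, neg_zero, zero_add, zero_mul, mul_zero, zero_smul]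
  have hxexpc : ∀ x : A, x ∈ H2 → n * x = 0 → x * expc = x := by
    intro x hx hxn
    show x * ((1 : A) + Complex.I • n - (1 / 2 : ℂ) • (n * n)) = x
    rw [mul_sub, mul_add, mul_one, mul_smul_comm, mul_comm x n, hxn, smul_zero, add_zero,
      mul_smul_comm, hmul24 x hx _ hm4, smul_zero, sub_zero]
  have he1AR : n + Complex.I • (n * n) ∈ ARsub := hnexpc ▸ hARmem n hcn
  have hmAR : n * n ∈ ARsub := hmexpc ▸ hARmem _ hcm2
  have hEAR : expc ∈ ARsub := by
    have := hARmem 1 hc1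
    rwa [one_mul] at this
  have hprimAR : primR ≤ ARsub := by
    rintro x ⟨hx1, hx2⟩
    have hx2'' : x ∈ prim := hx2
    obtain ⟨hx2', hxker⟩ := Submodule.mem_inf.mp hx2''
    have hxn : n * x = 0 := by
      have h := LinearMap.mem_ker.mp hxker
      rw [LinearMap.mulRight_apply] at h
      rw [mul_comm]
      exact h
    have hcx : conj x = x := by
      have h := LinearMap.mem_ker.mp hx1
      rw [LinearMap.sub_apply, LinearMap.id_apply, sub_eq_zero] at h
      exact h
    exact hxexpc x hx2' hxn ▸ hARmem x hcx
  have hspanAR : Submodule.span ℝ {n + Complex.I • (n * n), n * n} ≤ ARsub := by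
    rw [Submodule.span_le]
    rintro y hy
    simp only [Set.mem_insert_iff, Set.mem_singleton_iff] at hy
    rcases hy with rfl | rfl
    · exact he1AR
    · exact hmAR
  -- values of W, WC, F
  have hWb : ∀ l : ℤ, l ≤ 0 → W l = ⊥ := fun l hl => by simp only [W, if_pos hl]
  have hWval1 : W 1 = Submodule.span ℝ {n + Complex.I • (n * n), n * n} := by
    simp only [W]
    norm_num
  have hW23 : ∀ l : ℤ, 1 < l → l ≤ 3 →
      W l = Submodule.span ℝ {n + Complex.I • (n * n), n * n} ⊔ primR := by
    intro l h1 h2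
    simp only [W]
    rw [if_neg (by omega), if_neg (by omega), if_pos h2]
  have hW4 : ∀ l : ℤ, 4 ≤ l → W l = ARsub := by
    intro l hl
    simp only [W]
    rw [if_neg (by omega), if_neg (by omega), if_neg (by omega)]
  have hWCb : ∀ l : ℤ, l ≤ 0 → WC l = ⊥ := by
    intro l hl
    simp only [WC]
    rw [hWb l hl]
    simp
  have hWCe : WC 1 = Submodule.span ℂ {n + Complex.I • (n * n), n * n} := by
    simp only [WC]
    rw [hWval1, Submodule.span_span_of_tower]
  have hspan_pair : Submodule.span ℂ {n + Complex.I • (n * n), n * n}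
      = Submodule.span ℂ {n, n * n} := by
    apply le_antisymm <;> rw [Submodule.span_le] <;> rintro y hy <;>
      simp only [Set.mem_insert_iff, Set.mem_singleton_iff] at hy
    · rcases hy with rfl | rfl
      · exact add_mem (Submodule.subset_span (by simp))
          (Submodule.smul_mem _ _ (Submodule.subset_span (by simp)))
      · exact Submodule.subset_span (by simp)
    · rcases hy with h | h <;> rw [h]
      · have e : n = (n + Complex.I • (n * n)) - Complex.I • (n * n) := by abel
        rw [e]
        exact sub_mem (Submodule.subset_span (by simp))
          (Submodule.smul_mem _ _ (Submodule.subset_span (by simp)))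
      · exact Submodule.subset_span (by simp)
  have hWC1 : WC 1 = Submodule.span ℂ {n, n * n} := by rw [hWCe, hspan_pair]
  have hsupspan : ∀ P Q : Submodule ℝ A,
      Submodule.span ℂ ((P ⊔ Q : Submodule ℝ A) : Set A)
        = Submodule.span ℂ (P : Set A) ⊔ Submodule.span ℂ (Q : Set A) := by
    intro P Q
    apply le_antisymm
    · rw [Submodule.span_le]
      rintro x hx
      rcases Submodule.mem_sup.mp hx with ⟨p, hp, q, hq, rfl⟩
      exact add_mem (Submodule.mem_sup_left (Submodule.subset_span hp))
        (Submodule.mem_sup_right (Submodule.subset_span hq))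
    · apply sup_le <;> apply Submodule.span_mono
      · exact fun x hx => Submodule.mem_sup_left hx
      · exact fun x hx => Submodule.mem_sup_right hx
  have hprimspan : Submodule.span ℂ (primR : Set A)
      = H2 ⊓ LinearMap.ker (LinearMap.mulRight ℂ n) := by
    apply le_antisymm
    · rw [Submodule.span_le]
      exact fun x hx => hx.2
    · intro x hx
      obtain ⟨hx2, hxker⟩ := Submodule.mem_inf.mp hx
      have hxn : n * x = 0 := by
        have h := LinearMap.mem_ker.mp hxker
        rw [LinearMap.mulRight_apply] at h
        rw [mul_comm]
        exact h
      obtain ⟨u, v, hcu, hcv, hu2, hv2, hnu, hnv, hxd⟩ := hsplit x hx2 hxn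
      have humem : u ∈ primR := ⟨hRmem u hcu, ⟨hu2, LinearMap.mem_ker.mpr
        (by rw [LinearMap.mulRight_apply, mul_comm]; exact hnu)⟩⟩
      have hvmem : v ∈ primR := ⟨hRmem v hcv, ⟨hv2, LinearMap.mem_ker.mpr
        (by rw [LinearMap.mulRight_apply, mul_comm]; exact hnv)⟩⟩
      rw [hxd]
      exact add_mem (Submodule.subset_span humem)
        (Submodule.smul_mem _ _ (Submodule.subset_span hvmem))
  have hle12 : Submodule.span ℂ {n, n * n} ≤ H2 ⊔ H4 := by
    rw [Submodule.span_le]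
    rintro y hy
    simp only [Set.mem_insert_iff, Set.mem_singleton_iff] at hy
    rcases hy with h | h <;> rw [h]
    · exact Submodule.mem_sup_left hn
    · exact Submodule.mem_sup_right hm4
  have hprimle : prim ≤ H2 := fun x hx => hx.1
  have hWC23 : ∀ l : ℤ, 1 < l → l ≤ 3 → WC l = H2 ⊔ H4 := by
    intro l h1 h2
    simp only [WC]
    rw [hW23 l h1 h2, hsupspan, Submodule.span_span_of_tower, hspan_pair, hprimspan]
    apply le_antisymm
    · apply sup_le hle12
      exact fun x hx => Submodule.mem_sup_left (hprimle hx)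
    · apply sup_le
      · conv_lhs => rw [hlef]
        apply sup_le
        · exact fun x hx => Submodule.mem_sup_right hx
        · rw [Submodule.span_le]
          rintro y hy
          simp only [Set.mem_singleton_iff] at hy
          subst hy
          exact Submodule.mem_sup_left (Submodule.subset_span (by simp))
      · rw [hH4, Submodule.span_le]
        rintro y hy
        simp only [Set.mem_singleton_iff] at hy
        subst hy
        exact Submodule.mem_sup_left (Submodule.subset_span (by simp))
  have hnspan : n ∈ Submodule.span ℂ (ARsub : Set A) := by
    have e : n = (n + Complex.I • (n * n)) - Complex.I • (n * n) := by abel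
    rw [e]
    exact sub_mem (Submodule.subset_span he1AR)
      (Submodule.smul_mem _ _ (Submodule.subset_span hmAR))
  have h1span : (1 : A) ∈ Submodule.span ℂ (ARsub : Set A) := by
    have e : (1 : A) = expc - Complex.I • n + (1 / 2 : ℂ) • (n * n) := by
      show (1 : A) = (1 + Complex.I • n - (1 / 2 : ℂ) • (n * n)) - Complex.I • n
        + (1 / 2 : ℂ) • (n * n)
      abel
    rw [e]
    exact add_mem (sub_mem (Submodule.subset_span hEAR)
      (Submodule.smul_mem _ _ hnspan)) (Submodule.smul_mem _ _ (Submodule.subset_span hmAR))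
  have hWCtop : ∀ l : ℤ, 4 ≤ l → WC l = ⊤ := by
    intro l hl
    simp only [WC]
    rw [hW4 l hl, eq_top_iff, ← hsum]
    apply sup_le (sup_le ?_ ?_) ?_
    · rw [hH0, Submodule.span_le]
      rintro y hy
      simp only [Set.mem_singleton_iff] at hy
      subst hy
      exact h1span
    · conv_lhs => rw [hlef]
      apply sup_le
      · rw [← hprimspan]
        exact Submodule.span_mono hprimAR
      · rw [Submodule.span_le]
        rintro y hy
        simp only [Set.mem_singleton_iff] at hy
        subst hy
        exact hnspan
    · rw [hH4, Submodule.span_le]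
      rintro y hy
      simp only [Set.mem_singleton_iff] at hy
      subst hy
      exact Submodule.subset_span hmAR
  have hF0 : ∀ p : ℤ, p ≤ 0 → F p = ⊤ := fun p hp => by simp only [F, if_pos hp]
  have hF1 : F 1 = H0 ⊔ H2 := by simp only [F]; norm_num
  have hF2 : F 2 = H0 := by simp only [F]; norm_num
  have hF3 : ∀ p : ℤ, 3 ≤ p → F p = ⊥ := by
    intro p hp
    simp only [F]
    rw [if_neg (by omega), if_neg (by omega), if_neg (by omega)]
  have hH0mem : ∀ y ∈ H0, ∃ c : ℂ, c • (1 : A) = y := fun y hy =>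
    Submodule.mem_span_singleton.mp (hH0 ▸ hy)
  have hH4mem : ∀ z ∈ H4, ∃ c : ℂ, c • (n * n) = z := fun z hz =>
    Submodule.mem_span_singleton.mp (hH4 ▸ hz)
  -- the ten statements
  refine ⟨?_, ?_, ?_, ?_, ?_, ?_, ?_, ?_, ?_, ?_⟩
  -- goal 1 : Q₁(n², e₁) = K
  · show Complex.I / 2 * (p0 (C (n * n)) (n + Complex.I • (n * n))
        - p0 (n * n) (C (n + Complex.I • (n * n)))) = (K : ℂ)
    rw [hCm', hCe1]
    simp only [map_neg, map_add, map_smul, LinearMap.neg_apply, LinearMap.add_apply,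
      LinearMap.smul_apply, smul_eq_mul, hp00, hp02, hp20, hp22]
    ring_nf
    simp [Complex.I_sq]
  -- goal 2 : Q₁(e₁, e₁) = 0
  · show Complex.I / 2 * (p0 (C (n + Complex.I • (n * n))) (n + Complex.I • (n * n))
        - p0 (n + Complex.I • (n * n)) (C (n + Complex.I • (n * n)))) = 0
    rw [hCe1]
    simp only [map_neg, map_add, map_smul, LinearMap.neg_apply, LinearMap.add_apply,
      LinearMap.smul_apply, smul_eq_mul, hp00, hp02, hp20, hp22]
    ring
  -- goal 3 : Q₁(n², n²) = 0
  · show Complex.I / 2 * (p0 (C (n * n)) (n * n) - p0 (n * n) (C (n * n))) = 0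
    rw [hCm']
    simp only [map_neg, map_add, map_smul, LinearMap.neg_apply, LinearMap.add_apply,
      LinearMap.smul_apply, smul_eq_mul, hp00, hp02, hp20, hp22]
    ring
  -- goal 4 : Q₄(1,1) = K
  · rw [one_mul, one_mul, sq]
    exact hK
  -- goal 5 : positivity of -∫x² on real primitive classes
  · intro x h1 h2 h3 h4
    have h := hneg x h1 h2 h3 h4
    simp only [Complex.neg_re, neg_pos]
    exact h.1
  -- goal 6 : H₁ is positive definite
  · intro x hx hx0
    rw [hWCe] at hx
    obtain ⟨a, b, hab⟩ := Submodule.mem_span_pair.mp hx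
    have eAR : conjAR x = (starRingEnd ℂ a) • (n + Complex.I • (n * n))
        + (starRingEnd ℂ b) • (n * n) := by
      rw [← hab, map_add, hARsmul, hARsmul, hARe1, hARm]
    have eCx : C x = a • (n * n) + b • (-(n + Complex.I • (n * n))) := by
      rw [← hab, map_add, map_smul, map_smul, hCe1, hCm']
    have eCCx : C (C x) = a • (-(n + Complex.I • (n * n))) + b • (-(n * n)) := by
      rw [eCx, map_add, map_smul, map_smul, hCm', map_neg, hCe1]
    have eCAR : C (conjAR x) = (starRingEnd ℂ a) • (n * n)
        + (starRingEnd ℂ b) • (-(n + Complex.I • (n * n))) := by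
      rw [eAR, map_add, map_smul, map_smul, hCe1, hCm']
    have hval : Q1 (C x) (conjAR x)
        = ((Complex.normSq a + Complex.normSq b) * K : ℝ) := by
      show Complex.I / 2 * (p0 (C (C x)) (conjAR x) - p0 (C x) (C (conjAR x))) = _
      rw [eCCx, eCAR, eCx, eAR]
      simp only [map_add, map_neg, map_smul, LinearMap.add_apply, LinearMap.neg_apply,
        LinearMap.smul_apply, smul_eq_mul, hp00, hp02, hp20, hp22]
      push_cast
      linear_combination (-(K : ℂ) * (a * (starRingEnd ℂ a) + b * (starRingEnd ℂ b)))
          * Complex.I_mul_I + (K : ℂ) * Complex.mul_conj a + (K : ℂ) * Complex.mul_conj b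
    have hab0 : ¬(a = 0 ∧ b = 0) := by
      rintro ⟨rfl, rfl⟩
      exact hx0 (by rw [← hab]; simp)
    have hpos : 0 < Complex.normSq a + Complex.normSq b := by
      rcases not_and_or.mp hab0 with h | h
      · linarith [Complex.normSq_pos.mpr h, Complex.normSq_nonneg b]
      · linarith [Complex.normSq_pos.mpr h, Complex.normSq_nonneg a]
    rw [hval]
    constructor
    · rw [Complex.ofReal_re]
      exact mul_pos hpos hKpos
    · rw [Complex.ofReal_im]
  -- goal 7 : H₂ is positive definite
  · intro x hx hnx hx0
    obtain ⟨u, v, hcu, hcv, hu2, hv2, hnu, hnv, hxd⟩ := hsplit x hx hnx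
    have hcx : conj x = u - Complex.I • v := by
      rw [hxd, map_add, hca, hcu, hcv, Complex.conj_I, neg_smul, ← sub_eq_add_neg]
    have hx4 : x * conj x ∈ H4 := hmul22 x hx _ (hcH2 x hx)
    have hprod : x * conj x = u * u + v * v := by
      rw [show x * conj x = (u + Complex.I • v) * (u - Complex.I • v) by rw [← hcx, ← hxd]]
      have e1 : (u + Complex.I • v) * (u - Complex.I • v)
          = u * u - Complex.I • (u * v) + Complex.I • (v * u)
            - (Complex.I * Complex.I) • (v * v) := by
        simp only [mul_sub, sub_mul, mul_add, add_mul, smul_mul_assoc, mul_smul_comm,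
          smul_add, smul_sub, smul_smul]
        match_scalars <;> ring
      rw [e1, mul_comm v u, Complex.I_mul_I]
      match_scalars <;> ring
    have key : x * conjAR x = u * u + v * v := by
      rw [hcAR, ← mul_assoc, hzE2 _ hx4, hprod]
    have hneg' : ∀ w : A, conj w = w → w ∈ H2 → n * w = 0 →
        (intg (w * w)).re ≤ 0 ∧ (intg (w * w)).im = 0 ∧
          (w ≠ 0 → (intg (w * w)).re < 0) := by
      intro w h1 h2 h3
      by_cases hw : w = 0
      · subst hw; simp
      · have h := hneg w h1 h2 h3 hw
        exact ⟨h.1.le, h.2, fun _ => h.1⟩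
    have hu := hneg' u hcu hu2 hnu
    have hv := hneg' v hcv hv2 hnv
    have huv : ¬(u = 0 ∧ v = 0) := by
      rintro ⟨rfl, rfl⟩
      exact hx0 (by rw [hxd]; simp)
    rw [key, map_add]
    constructor
    · simp only [Complex.neg_re, Complex.add_re]
      rcases not_and_or.mp huv with h | h
      · have := hu.2.2 h
        linarith [hv.1]
      · have := hv.2.2 h
        linarith [hu.1]
    · simp [Complex.add_im, hu.2.1, hv.2.1]
  -- goal 8 : H₄ is positive definite
  · intro a ha
    have h1 : conjAR (a • (1 : A)) = (starRingEnd ℂ a) • (expc * expc) := by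
      rw [hARsmul, hAR1]
    have h2 : (expc * expc) * (n * n) = n * n := by
      rw [mul_comm]
      exact hzE2 _ hm4
    have h3 : (a • (1 : A)) * (conjAR (a • (1 : A)) * n ^ 2)
        = ((Complex.normSq a : ℂ)) • (n * n) := by
      rw [h1, sq, smul_mul_assoc ((starRingEnd ℂ) a) (expc * expc) (n * n), h2,
        mul_smul_comm, smul_mul_assoc, one_mul, smul_smul,
        mul_comm ((starRingEnd ℂ) a) a, Complex.mul_conj]
    rw [h3, map_smul, hK, smul_eq_mul]
    have h4 : (Complex.normSq a : ℂ) * (K : ℂ) = ((Complex.normSq a * K : ℝ) : ℂ) := by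
      push_cast
      ring
    rw [h4]
    constructor
    · rw [Complex.ofReal_re]
      exact mul_pos (Complex.normSq_pos.mpr ha) hKpos
    · rw [Complex.ofReal_im]
  -- goal 9 : W l ≤ ARsub
  · intro l
    simp only [W]
    split_ifs
    · exact bot_le
    · exact hspanAR
    · exact sup_le hspanAR hprimAR
    · exact le_rfl
  -- goal 10 : opposedness
  · intro k p q hpq
    have hrs : ∀ (S : Submodule ℂ A) (y : A), y ∈ S.restrictScalars ℝ ↔ y ∈ S :=
      fun S y => Iff.rfl
    have hmono : ∀ (S T : Submodule ℂ A), S ≤ T →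
        S.restrictScalars ℝ ≤ T.restrictScalars ℝ := fun S T h y hy => h hy
    have hmaptop : ∀ y : A,
        y ∈ Submodule.map conjAR ((⊤ : Submodule ℂ A).restrictScalars ℝ) :=
      fun y => ⟨conjAR y, trivial, hARinv y⟩
    have hmapbot : ∀ y : A,
        y ∈ Submodule.map conjAR ((⊥ : Submodule ℂ A).restrictScalars ℝ) → y = 0 := by
      intro y hy
      have h0 : conjAR y = 0 := (hmem_map ⊥ y).mp hy
      have h1 := hARinv y
      rw [h0, map_zero] at h1
      exact h1.symm
    have hAR2e : conjAR (n + (2 * Complex.I) • (n * n)) = n := by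
      rw [map_add, hARsmul, hARn, hARm, map_mul, Complex.conj_I, map_ofNat]
      match_scalars <;> ring
    rcases le_or_gt k 0 with hk | hk
    · -- k ≤ 0
      rw [hWCb k hk, hWCb (k - 1) (by omega)]
      constructor
      · apply le_antisymm
        · exact sup_le (sup_le (hmono _ _ inf_le_right) inf_le_right) le_rfl
        · exact le_sup_right
      · exact fun y hy => hy.2
    by_cases hk1 : k = 1
    · subst hk1
      rw [hWC1, show (1 : ℤ) - 1 = 0 by norm_num, hWCb 0 le_rfl]
      constructor
      · apply le_antisymm
        · exact sup_le (sup_le (hmono _ _ inf_le_right) inf_le_right) (hmono _ _ bot_le)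
        · intro y hy
          have hy' : y ∈ Submodule.span ℂ {n, n * n} := (hrs _ _).mp hy
          obtain ⟨a, b, hab⟩ := Submodule.mem_span_pair.mp hy'
          rcases le_or_gt p 0 with hp | hp
          · exact Submodule.mem_sup_left (Submodule.mem_sup_left
              (by rw [hF0 p hp]; exact ⟨Submodule.mem_top, hy'⟩))
          by_cases hp1 : p = 1
          · subst hp1
            have hq1 : q = 1 := by omega
            subst hq1
            have hy2 : y = (a - (-(Complex.I / 2) * b)) • n
                + (-(Complex.I / 2) * b) • (n + (2 * Complex.I) • (n * n)) := by
              rw [← hab]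
              match_scalars
              · ring
              · ring_nf
                simp [Complex.I_sq]
            rw [hy2]
            apply Submodule.add_mem
            · apply Submodule.mem_sup_left
              apply Submodule.mem_sup_left
              rw [hF1]
              exact ⟨Submodule.mem_sup_right (Submodule.smul_mem _ _ hn),
                Submodule.smul_mem _ _ (Submodule.subset_span (by simp))⟩
            · apply Submodule.mem_sup_left
              apply Submodule.mem_sup_right
              constructor
              · apply (hmem_map _ _).mpr
                rw [hARsmul, hAR2e, hF1]
                exact Submodule.mem_sup_right (Submodule.smul_mem _ _ hn)
              · exact (hrs _ _).mpr (Submodule.smul_mem _ _ (add_mem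
                  (Submodule.subset_span (by simp))
                  (Submodule.smul_mem _ _ (Submodule.subset_span (by simp)))))
          · have hq : q ≤ 0 := by omega
            apply Submodule.mem_sup_left
            apply Submodule.mem_sup_right
            rw [hF0 q hq]
            exact ⟨hmaptop y, hy⟩
      · intro y hy
        obtain ⟨⟨hy1, hy2⟩, hy3⟩ := hy
        have hy3' : y ∈ Submodule.span ℂ {n, n * n} := hy3
        obtain ⟨a, b, hab⟩ := Submodule.mem_span_pair.mp hy3'
        suffices h : y = 0 by rw [h]; exact Submodule.zero_mem _
        rcases le_or_gt p 0 with hp | hp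
        · by_cases hq2 : q = 2
          · subst hq2
            have h := (hmem_map _ y).mp hy2
            rw [hF2] at h
            obtain ⟨c, hc⟩ := hH0mem _ h
            have hyE2 : y = (starRingEnd ℂ c) • (expc * expc) := by
              have h5 := congrArg conjAR hc
              rw [hARsmul, hAR1, hARinv] at h5
              exact h5.symm
            have h6 : (starRingEnd ℂ c) • (1 : A)
                + ((2 * Complex.I * (starRingEnd ℂ c) - a) • n)
                + ((-(2 : ℂ) * (starRingEnd ℂ c) - b) • (n * n))
                = (starRingEnd ℂ c) • ((1 : A) + (2 * Complex.I) • n - (2 : ℂ) • (n * n))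
                  - (a • n + b • (n * n)) := by
              match_scalars <;> ring
            rw [← hE2, ← hyE2, hab, sub_self] at h6
            obtain ⟨h7, _, _⟩ := hindep _ (Submodule.smul_mem _ _ h1H0) _
              (Submodule.smul_mem _ _ hn) _ (Submodule.smul_mem _ _ hm4) h6
            rw [hyE2, hsmul1 _ h7, zero_smul]
          · have h := (hmem_map _ y).mp hy2
            rw [hF3 q (by omega)] at h
            have h0 : conjAR y = 0 := h
            have h1 := hARinv y
            rw [h0, map_zero] at h1
            exact h1.symm
        by_cases hp1 : p = 1
        · subst hp1
          have hq1 : q = 1 := by omega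
          subst hq1
          have hy1' := (hrs _ _).mp hy1
          rw [hF1] at hy1'
          obtain ⟨w0, hw0, w2, hw2, hws⟩ := Submodule.mem_sup.mp hy1'
          have e : w0 + (w2 - a • n) + (-b) • (n * n)
              = (w0 + w2) - (a • n + b • (n * n)) := by module
          rw [hws, hab, sub_self] at e
          obtain ⟨_, _, h9⟩ := hindep _ hw0 _
            (sub_mem hw2 (Submodule.smul_mem _ _ hn)) _ (Submodule.smul_mem _ _ hm4) e
          have hb0 : b = 0 := neg_eq_zero.mp (hsmuln2 _ h9)
          have hyn : y = a • n := by rw [← hab, hb0, zero_smul, add_zero]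
          have h2' := (hmem_map _ y).mp hy2
          rw [hF1] at h2'
          have hARy : conjAR y = (starRingEnd ℂ a) • (n + (2 * Complex.I) • (n * n)) := by
            rw [hyn, hARsmul, hARn]
          rw [hARy] at h2'
          obtain ⟨v0, hv0, v2, hv2, hvs⟩ := Submodule.mem_sup.mp h2'
          have e2 : v0 + (v2 - (starRingEnd ℂ a) • n)
              + (-(2 * Complex.I) * (starRingEnd ℂ a)) • (n * n)
              = (v0 + v2) - ((starRingEnd ℂ a) • (n + (2 * Complex.I) • (n * n))) := by
            match_scalars <;> ring
          rw [hvs, sub_self] at e2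
          obtain ⟨_, _, h9'⟩ := hindep _ hv0 _
            (sub_mem hv2 (Submodule.smul_mem _ _ hn)) _ (Submodule.smul_mem _ _ hm4) e2
          have h10 := hsmuln2 _ h9'
          have ha0 : (starRingEnd ℂ) a = 0 := by
            rcases mul_eq_zero.mp h10 with h | h
            · exact absurd h (by simp [Complex.ext_iff])
            · exact h
          have ha0' : a = 0 := by
            have := congrArg (starRingEnd ℂ) ha0
            rwa [Complex.conj_conj, map_zero] at this
          rw [hyn, ha0', zero_smul]
        by_cases hp2 : p = 2
        · subst hp2
          have hy1' := (hrs _ _).mp hy1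
          rw [hF2] at hy1'
          obtain ⟨c, hc⟩ := hH0mem _ hy1'
          have e : c • (1 : A) + (-a) • n + (-b) • (n * n) = 0 := by
            have e1 : c • (1 : A) + (-a) • n + (-b) • (n * n)
                = c • (1 : A) - (a • n + b • (n * n)) := by module
            rw [e1, hc, hab, sub_self]
          obtain ⟨h7, _, _⟩ := hindep _ (Submodule.smul_mem _ _ h1H0) _
            (Submodule.smul_mem _ _ hn) _ (Submodule.smul_mem _ _ hm4) e
          rw [← hc, hsmul1 _ h7, zero_smul]
        · have hy1' := (hrs _ _).mp hy1
          rw [hF3 p (by omega)] at hy1'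
          exact Submodule.mem_bot ℂ |>.mp hy1'
    by_cases hk2 : k = 2
    · subst hk2
      rw [hWC23 2 (by norm_num) (by norm_num), show (2 : ℤ) - 1 = 1 by norm_num, hWC1]
      constructor
      · apply le_antisymm
        · exact sup_le (sup_le (hmono _ _ inf_le_right) inf_le_right) (hmono _ _ hle12)
        · intro y hy
          have hy' : y ∈ H2 ⊔ H4 := (hrs _ _).mp hy
          obtain ⟨x2, hx2, z4, hz4, hxz⟩ := Submodule.mem_sup.mp hy'
          rcases le_or_gt p 0 with hp | hp
          · exact Submodule.mem_sup_left (Submodule.mem_sup_left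
              (by rw [hF0 p hp]; exact ⟨Submodule.mem_top, hy'⟩))
          by_cases hp1 : p = 1
          · subst hp1
            rw [← hxz]
            apply Submodule.add_mem
            · apply Submodule.mem_sup_left
              apply Submodule.mem_sup_left
              rw [hF1]
              exact ⟨Submodule.mem_sup_right hx2, Submodule.mem_sup_left hx2⟩
            · apply Submodule.mem_sup_right
              apply (hrs _ _).mpr
              obtain ⟨c, hc⟩ := hH4mem _ hz4
              rw [← hc]
              exact Submodule.smul_mem _ _ (Submodule.subset_span (by simp))
          by_cases hp2 : p = 2
          · subst hp2
            have hq1 : q = 1 := by omega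
            subst hq1
            have hnx4 : n * x2 ∈ H4 := hmul22 n hn x2 hx2
            have hdec : y = (x2 + (2 * Complex.I) • (n * x2))
                + (z4 - (2 * Complex.I) • (n * x2)) := by
              rw [← hxz]; abel
            rw [hdec]
            apply Submodule.add_mem
            · apply Submodule.mem_sup_left
              apply Submodule.mem_sup_right
              constructor
              · apply (hmem_map _ _).mpr
                have e3 : x2 + (2 * Complex.I) • (n * x2) = conjAR (conj x2) := by
                  rw [hcAR, hcc, hxE2 x2 hx2]
                rw [e3, hARinv, hF1]
                exact Submodule.mem_sup_right (hcH2 x2 hx2)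
              · exact (hrs _ _).mpr (add_mem (Submodule.mem_sup_left hx2)
                  (Submodule.mem_sup_right (Submodule.smul_mem _ _ hnx4)))
            · apply Submodule.mem_sup_right
              apply (hrs _ _).mpr
              obtain ⟨c, hc⟩ := hH4mem _ hz4
              obtain ⟨d, hd⟩ := hH4mem _ hnx4
              rw [← hc, ← hd]
              exact sub_mem (Submodule.smul_mem _ _ (Submodule.subset_span (by simp)))
                (Submodule.smul_mem _ _ (Submodule.smul_mem _ _
                  (Submodule.subset_span (by simp))))
          · apply Submodule.mem_sup_left
            apply Submodule.mem_sup_right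
            rw [hF0 q (by omega)]
            exact ⟨hmaptop y, hy⟩
      · intro y hy
        obtain ⟨⟨hy1, hy2⟩, hy3⟩ := hy
        have hy3' : y ∈ H2 ⊔ H4 := hy3
        rcases le_or_gt p 0 with hp | hp
        · have h := (hmem_map _ y).mp hy2
          rw [hF3 q (by omega)] at h
          have h0 : conjAR y = 0 := h
          have h1 := hARinv y
          rw [h0, map_zero] at h1
          rw [← h1]
          exact Submodule.zero_mem _
        by_cases hp1 : p = 1
        · subst hp1
          have hq2 : q = 2 := by omega
          subst hq2
          have h := (hmem_map _ y).mp hy2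
          rw [hF2] at h
          obtain ⟨c, hc⟩ := hH0mem _ h
          have hyE2 : y = (starRingEnd ℂ c) • (expc * expc) := by
            have h5 := congrArg conjAR hc
            rw [hARsmul, hAR1, hARinv] at h5
            exact h5.symm
          have hy1' := (hrs _ _).mp hy1
          rw [hF1] at hy1'
          obtain ⟨w0, hw0, w2, hw2, hws⟩ := Submodule.mem_sup.mp hy1'
          have e : ((starRingEnd ℂ c) • (1 : A) - w0)
              + ((2 * Complex.I * (starRingEnd ℂ c)) • n - w2)
              + (-(2 : ℂ) * (starRingEnd ℂ c)) • (n * n)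
              = (starRingEnd ℂ c) • ((1 : A) + (2 * Complex.I) • n - (2 : ℂ) • (n * n))
                - (w0 + w2) := by
            match_scalars <;> ring
          rw [← hE2, ← hyE2, hws, sub_self] at e
          obtain ⟨_, _, h9⟩ := hindep _ (sub_mem (Submodule.smul_mem _ _ h1H0) hw0) _
            (sub_mem (Submodule.smul_mem _ _ hn) hw2) _ (Submodule.smul_mem _ _ hm4) e
          have h10 := hsmuln2 _ h9
          have hc0 : (starRingEnd ℂ) c = 0 := by
            rcases mul_eq_zero.mp h10 with h' | h'
            · exact absurd h' (by norm_num)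
            · exact h'
          rw [hyE2, hc0, zero_smul]
          exact Submodule.zero_mem _
        by_cases hp2 : p = 2
        · subst hp2
          have hy1' := (hrs _ _).mp hy1
          rw [hF2] at hy1'
          obtain ⟨c, hc⟩ := hH0mem _ hy1'
          obtain ⟨x2, hx2, z4, hz4, hxz⟩ := Submodule.mem_sup.mp hy3'
          have e : c • (1 : A) + (-x2) + (-z4) = 0 := by
            have e1 : c • (1 : A) + (-x2) + (-z4) = c • (1 : A) - (x2 + z4) := by module
            rw [e1, hc, hxz, sub_self]
          obtain ⟨h7, _, _⟩ := hindep _ (Submodule.smul_mem _ _ h1H0) _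
            (neg_mem hx2) _ (neg_mem hz4) e
          rw [← hc, hsmul1 _ h7, zero_smul]
          exact Submodule.zero_mem _
        · have hy1' := (hrs _ _).mp hy1
          rw [hF3 p (by omega)] at hy1'
          rw [Submodule.mem_bot ℂ |>.mp hy1']
          exact Submodule.zero_mem _
    by_cases hk3 : k = 3
    · subst hk3
      rw [hWC23 3 (by norm_num) (by norm_num), show (3 : ℤ) - 1 = 2 by norm_num,
        hWC23 2 (by norm_num) (by norm_num)]
      constructor
      · apply le_antisymm
        · exact sup_le (sup_le (hmono _ _ inf_le_right) inf_le_right) le_rfl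
        · exact le_sup_right
      · exact fun y hy => hy.2
    by_cases hk4 : k = 4
    · subst hk4
      rw [hWCtop 4 (by norm_num), show (4 : ℤ) - 1 = 3 by norm_num,
        hWC23 3 (by norm_num) (by norm_num)]
      constructor
      · apply le_antisymm
        · intro y _
          exact (hrs _ _).mpr Submodule.mem_top
        · intro y _
          have hytop : y ∈ H0 ⊔ H2 ⊔ H4 := by rw [hsum]; exact Submodule.mem_top
          obtain ⟨w, hw, z4, hz4, hwz⟩ := Submodule.mem_sup.mp hytop
          rcases le_or_gt p 0 with hp | hp
          · exact Submodule.mem_sup_left (Submodule.mem_sup_left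
              (by rw [hF0 p hp]; exact ⟨Submodule.mem_top, Submodule.mem_top⟩))
          by_cases hp1 : p = 1
          · subst hp1
            rw [← hwz]
            exact Submodule.add_mem _
              (Submodule.mem_sup_left (Submodule.mem_sup_left
                (by rw [hF1]; exact ⟨hw, Submodule.mem_top⟩)))
              (Submodule.mem_sup_right ((hrs _ _).mpr (Submodule.mem_sup_right hz4)))
          by_cases hp2 : p = 2
          · subst hp2
            obtain ⟨w0, hw0, w2, hw2, hws⟩ := Submodule.mem_sup.mp hw
            have e : y = w0 + (w2 + z4) := by rw [← hwz, ← hws, add_assoc]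
            rw [e]
            exact Submodule.add_mem _
              (Submodule.mem_sup_left (Submodule.mem_sup_left
                (by rw [hF2]; exact ⟨hw0, Submodule.mem_top⟩)))
              (Submodule.mem_sup_right ((hrs _ _).mpr
                (add_mem (Submodule.mem_sup_left hw2) (Submodule.mem_sup_right hz4))))
          by_cases hp3 : p = 3
          · subst hp3
            have hq2 : q = 2 := by omega
            subst hq2
            obtain ⟨w0, hw0, w2, hw2, hws⟩ := Submodule.mem_sup.mp hw
            obtain ⟨c, hc⟩ := hH0mem _ hw0
            have e : y = c • (expc * expc)
                + ((w2 + z4) + (c • (1 : A) - c • (expc * expc))) := by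
              rw [← hwz, ← hws, ← hc]
              abel
            have e2 : c • (1 : A) - c • (expc * expc)
                = (-(2 * Complex.I * c)) • n + ((2 : ℂ) * c) • (n * n) := by
              rw [hE2]
              match_scalars <;> ring
            rw [e]
            apply Submodule.add_mem
            · apply Submodule.mem_sup_left
              apply Submodule.mem_sup_right
              constructor
              · apply (hmem_map _ _).mpr
                have e3 : conjAR (c • (expc * expc)) = (starRingEnd ℂ c) • (1 : A) := by
                  rw [hARsmul, hARE2]
                rw [e3, hF2]
                exact Submodule.smul_mem _ _ h1H0
              · exact (hrs _ _).mpr Submodule.mem_top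
            · apply Submodule.mem_sup_right
              apply (hrs _ _).mpr
              refine add_mem (add_mem (Submodule.mem_sup_left hw2)
                (Submodule.mem_sup_right hz4)) ?_
              rw [e2]
              exact add_mem (Submodule.mem_sup_left (Submodule.smul_mem _ _ hn))
                (Submodule.mem_sup_right (Submodule.smul_mem _ _ hm4))
          by_cases hp4 : p = 4
          · subst hp4
            have hq1 : q = 1 := by omega
            subst hq1
            have hwE : w * (expc * expc) = conjAR (conj w) := by rw [hcAR, hcc]
            obtain ⟨w0, hw0, w2, hw2, hws⟩ := Submodule.mem_sup.mp hw
            obtain ⟨c, hc⟩ := hH0mem _ hw0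
            have hwn : w * n ∈ H2 ⊔ H4 := by
              rw [← hws, add_mul, ← hc, smul_mul_assoc, one_mul]
              exact add_mem (Submodule.mem_sup_left (Submodule.smul_mem _ _ hn))
                (Submodule.mem_sup_right (hmul22 w2 hw2 n hn))
            have hwm : w * (n * n) ∈ H4 := by
              rw [← hws, add_mul, ← hc, smul_mul_assoc, one_mul, hmul24 w2 hw2 _ hm4,
                add_zero]
              exact Submodule.smul_mem _ _ hm4
            have e : y = w * (expc * expc) + (z4 + (w - w * (expc * expc))) := by
              rw [← hwz]
              abel
            have e2 : w - w * (expc * expc)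
                = (-(2 * Complex.I)) • (w * n) + (-(2 : ℂ)) • ((-(1 : ℂ)) • (w * (n * n))) := by
              rw [hE2, mul_sub, mul_add, mul_one, mul_smul_comm, mul_smul_comm]
              match_scalars <;> ring
            rw [e]
            apply Submodule.add_mem
            · apply Submodule.mem_sup_left
              apply Submodule.mem_sup_right
              constructor
              · apply (hmem_map _ _).mpr
                rw [hwE, hARinv, hF1, ← hws, map_add]
                exact add_mem (Submodule.mem_sup_left (hcH0 _ hw0))
                  (Submodule.mem_sup_right (hcH2 _ hw2))
              · exact (hrs _ _).mpr Submodule.mem_top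
            · apply Submodule.mem_sup_right
              apply (hrs _ _).mpr
              refine add_mem (Submodule.mem_sup_right hz4) ?_
              rw [e2]
              exact add_mem (Submodule.smul_mem _ _ hwn)
                (Submodule.mem_sup_right (Submodule.smul_mem _ _
                  (Submodule.smul_mem _ _ hwm)))
          · apply Submodule.mem_sup_left
            apply Submodule.mem_sup_right
            rw [hF0 q (by omega)]
            exact ⟨hmaptop y, Submodule.mem_top⟩
      · intro y hy
        obtain ⟨⟨hy1, hy2⟩, _⟩ := hy
        rcases le_or_gt p 2 with hp | hp
        · have h := (hmem_map _ y).mp hy2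
          rw [hF3 q (by omega)] at h
          have h0 : conjAR y = 0 := h
          have h1 := hARinv y
          rw [h0, map_zero] at h1
          rw [← h1]
          exact Submodule.zero_mem _
        · have hy1' := (hrs _ _).mp hy1
          rw [hF3 p (by omega)] at hy1'
          rw [Submodule.mem_bot ℂ |>.mp hy1']
          exact Submodule.zero_mem _
    · -- k ≥ 5
      rw [hWCtop k (by omega), hWCtop (k - 1) (by omega)]
      constructor
      · apply le_antisymm
        · intro y _
          exact (hrs _ _).mpr Submodule.mem_top
        · exact le_sup_right
      · intro y _
        exact (hrs _ _).mpr Submodule.mem_top
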